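/- Let X be a finite set, 𝒟 a collection of nonempty subsets of X. For each strict ranking π of X define ρ^π ∈ ℝ^{𝒟×X} by ρ^π(D,x) = 1 if x ∈ D and π(x) > π(y) for all y ∈ D \ {x}, and 0 otherwise. Then the affine hull of {ρ^π : π ranking of X} equals {q ∈ ℝ^{𝒟×X} : Σ_{x∈D} q(D,x) = 1 for all D ∈ 𝒟, and q(D,x) = 0 whenever x ∉ D}. Consequently, the dimension of the convex hull of {ρ^π} equals Σ_{D∈𝒟}(|D|−1). -/

import Mathlib

/-- The deterministic choice vector associated with a ranking `π` of `X`: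
`rhoVec 𝒟 π (D, x) = 1` iff `x ∈ D` is the `π`-best element of `D`. -/
def rhoVec {X : Type*} [Fintype X] [DecidableEq X] (𝒟 : Finset (Finset X)) {m : ℕ}
    (π : X ≃ Fin m) : ({D : Finset X // D ∈ 𝒟} × X) → ℝ :=
  fun q => if q.2 ∈ q.1.1 ∧ ∀ y ∈ q.1.1, y ≠ q.2 → π y < π q.2 then 1 else 0

set_option linter.unusedSectionVars false
set_option maxHeartbeats 1000000

namespace RUMAux

open Finset

variable {X : Type*} [Fintype X] [DecidableEq X]



lemma exists_rank (g : X → ℕ) (hg : Function.Injective g) :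
    ∃ π : X ≃ Fin (Fintype.card X), ∀ a b, π a < π b ↔ g a < g b := by
  classical
  set s : Finset ℕ := Finset.univ.image g with hs_def
  have hs : s.card = Fintype.card X := by
    rw [hs_def, Finset.card_image_of_injective _ hg, Finset.card_univ]
  let iso := s.orderIsoOfFin hs
  have hmem : ∀ a : X, g a ∈ s := fun a => Finset.mem_image_of_mem g (Finset.mem_univ a)
  let f : X → Fin (Fintype.card X) := fun a => iso.symm ⟨g a, hmem a⟩
  have hinj : Function.Injective f := by
    intro a b hab
    have := iso.symm.injective hab
    exact hg (congrArg Subtype.val this)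
  have hsurj : Function.Surjective f := by
    intro i
    obtain ⟨a, -, ha⟩ := Finset.mem_image.mp (iso i).2
    refine ⟨a, ?_⟩
    have : (⟨g a, hmem a⟩ : {x // x ∈ s}) = iso i := Subtype.ext ha
    simp [f, this]
  refine ⟨Equiv.ofBijective f ⟨hinj, hsurj⟩, ?_⟩
  intro a b
  show f a < f b ↔ _
  rw [OrderIso.lt_iff_lt]
  exact Subtype.mk_lt_mk

def blk (S : Finset X) (x y z : X) : ℕ :=
  if z ∈ S then 3 else if z = x then 2 else if z = y then 1 else 0

noncomputable def gkey (S : Finset X) (x y z : X) : ℕ :=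
  Fintype.card X * blk S x y z + (Fintype.equivFin X z : ℕ)

lemma gkey_inj (S : Finset X) (x y : X) : Function.Injective (gkey S x y) := by
  intro a b h
  have ha : (Fintype.equivFin X a : ℕ) < Fintype.card X := (Fintype.equivFin X a).isLt
  have hb : (Fintype.equivFin X b : ℕ) < Fintype.card X := (Fintype.equivFin X b).isLt
  have hmod := congrArg (· % Fintype.card X) h
  simp only [gkey, Nat.mul_add_mod] at hmod
  rw [Nat.mod_eq_of_lt ha, Nat.mod_eq_of_lt hb] at hmod
  exact (Fintype.equivFin X).injective (Fin.ext hmod)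

lemma gkey_mono {S : Finset X} {x y a b : X} (h : blk S x y a < blk S x y b) :
    gkey S x y a < gkey S x y b := by
  have ha : (Fintype.equivFin X a : ℕ) < Fintype.card X := (Fintype.equivFin X a).isLt
  unfold gkey
  calc Fintype.card X * blk S x y a + (Fintype.equivFin X a : ℕ)
      < Fintype.card X * (blk S x y a + 1) := by rw [Nat.mul_add, Nat.mul_one]; omega
    _ ≤ Fintype.card X * blk S x y b := Nat.mul_le_mul_left _ h
    _ ≤ _ := Nat.le_add_right _ _

lemma gkey_symm {S : Finset X} {x y a : X} (h1 : a ≠ x) (h2 : a ≠ y) :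
    gkey S x y a = gkey S y x a := by
  unfold gkey blk
  by_cases haS : a ∈ S <;> simp [haS, h1, h2]

lemma blk_fst {S : Finset X} {x : X} (hxS : x ∉ S) (y : X) : blk S x y x = 2 := by
  simp [blk, hxS]

lemma blk_snd {S : Finset X} {x y : X} (hyS : y ∉ S) (hyx : y ≠ x) : blk S x y y = 1 := by
  simp [blk, hyS, hyx]

lemma blk_mem {S : Finset X} {z : X} (hz : z ∈ S) (x y : X) : blk S x y z = 3 := by
  simp [blk, hz]

lemma blk_other {S : Finset X} {x y z : X} (h1 : z ∉ S) (h2 : z ≠ x) (h3 : z ≠ y) :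
    blk S x y z = 0 := by simp [blk, h1, h2, h3]

lemma blk_lt_three {S : Finset X} {z : X} (h : z ∉ S) (x y : X) : blk S x y z < 3 := by
  simp only [blk, if_neg h]; split_ifs <;> omega

lemma blk_lt_two {S : Finset X} {x z : X} (h1 : z ∉ S) (h2 : z ≠ x) (y : X) :
    blk S x y z < 2 := by
  simp only [blk, if_neg h1, if_neg h2]; split_ifs <;> omega

def deltaVec (𝒟 : Finset (Finset X)) (x y : X) (S : Finset X) :
    ({D : Finset X // D ∈ 𝒟} × X) → ℝ :=
  fun p => if x ∈ p.1.1 ∧ y ∈ p.1.1 ∧ ∀ s ∈ S, s ∉ p.1.1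
           then (if p.2 = x then 1 else if p.2 = y then -1 else 0) else 0

lemma rho_diff_delta (𝒟 : Finset (Finset X)) {x y : X} (hxy : x ≠ y) (S : Finset X)
    (hxS : x ∉ S) (hyS : y ∉ S) :
    ∃ π₁ π₂ : X ≃ Fin (Fintype.card X),
      rhoVec 𝒟 π₁ - rhoVec 𝒟 π₂ = deltaVec 𝒟 x y S := by
  obtain ⟨π₁, hπ₁⟩ := exists_rank (gkey S x y) (gkey_inj S x y)
  obtain ⟨π₂, hπ₂⟩ := exists_rank (gkey S y x) (gkey_inj S y x)
  have key₁ : ∀ a b : X, blk S x y a < blk S x y b → π₁ a < π₁ b :=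
    fun a b h => (hπ₁ a b).mpr (gkey_mono h)
  have key₂ : ∀ a b : X, blk S y x a < blk S y x b → π₂ a < π₂ b :=
    fun a b h => (hπ₂ a b).mpr (gkey_mono h)
  have iff₁₂ : ∀ a b : X, a ≠ x → a ≠ y → b ≠ x → b ≠ y →
      (π₁ a < π₁ b ↔ π₂ a < π₂ b) := by
    intro a b h1 h2 h3 h4
    rw [hπ₁, hπ₂, gkey_symm h1 h2, gkey_symm h3 h4]
  refine ⟨π₁, π₂, ?_⟩
  funext p
  obtain ⟨⟨D, hD⟩, z⟩ := p
  simp only [Pi.sub_apply, rhoVec, deltaVec]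
  by_cases hzD : z ∈ D
  case neg =>
    have h1 : ¬(z ∈ D ∧ ∀ w ∈ D, w ≠ z → π₁ w < π₁ z) := fun h => hzD h.1
    have h2 : ¬(z ∈ D ∧ ∀ w ∈ D, w ≠ z → π₂ w < π₂ z) := fun h => hzD h.1
    rw [if_neg h1, if_neg h2, sub_self]
    by_cases hg : x ∈ D ∧ y ∈ D ∧ ∀ s ∈ S, s ∉ D
    · have hzx : z ≠ x := by rintro rfl; exact hzD hg.1
      have hzy : z ≠ y := by rintro rfl; exact hzD hg.2.1
      rw [if_pos hg, if_neg hzx, if_neg hzy]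
    · rw [if_neg hg]
  case pos =>
  by_cases hDS : ∀ s ∈ S, s ∉ D
  · have hwS : ∀ w ∈ D, w ∉ S := fun w hw hwS' => hDS w hwS' hw
    by_cases hxD : x ∈ D
    · by_cases hyD : y ∈ D
      · -- guard true
        by_cases hzx : z = x
        · have hC1 : z ∈ D ∧ ∀ w ∈ D, w ≠ z → π₁ w < π₁ z := by
            refine ⟨hzD, fun w hw hwz => key₁ w z ?_⟩
            rw [hzx, blk_fst hxS]
            exact blk_lt_two (hwS w hw) (fun h : w = x => hwz (h.trans hzx.symm)) y
          have hC2 : ¬(z ∈ D ∧ ∀ w ∈ D, w ≠ z → π₂ w < π₂ z) := by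
            rintro ⟨-, h⟩
            have hlt : π₂ z < π₂ y := key₂ z y (by
              rw [hzx, blk_snd hxS hxy, blk_fst hyS x]; omega)
            exact lt_asymm hlt (h y hyD (by rw [hzx]; exact Ne.symm hxy))
          rw [if_pos hC1, if_neg hC2, if_pos ⟨hxD, hyD, hDS⟩, if_pos hzx]; norm_num
        · by_cases hzy : z = y
          · have hC2 : z ∈ D ∧ ∀ w ∈ D, w ≠ z → π₂ w < π₂ z := by
              refine ⟨hzD, fun w hw hwz => key₂ w z ?_⟩
              rw [hzy, blk_fst hyS]
              exact blk_lt_two (hwS w hw) (fun h : w = y => hwz (h.trans hzy.symm)) x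
            have hC1 : ¬(z ∈ D ∧ ∀ w ∈ D, w ≠ z → π₁ w < π₁ z) := by
              rintro ⟨-, h⟩
              have hlt : π₁ z < π₁ x := key₁ z x (by
                rw [hzy, blk_snd hyS (Ne.symm hxy), blk_fst hxS y]; omega)
              exact lt_asymm hlt (h x hxD (fun h' => hzx h'.symm))
            rw [if_neg hC1, if_pos hC2, if_pos ⟨hxD, hyD, hDS⟩, if_neg hzx, if_pos hzy]
            norm_num
          · have hC1 : ¬(z ∈ D ∧ ∀ w ∈ D, w ≠ z → π₁ w < π₁ z) := by
              rintro ⟨-, h⟩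
              have hlt : π₁ z < π₁ x := key₁ z x (by
                rw [blk_other (hwS z hzD) hzx hzy, blk_fst hxS y]; omega)
              exact lt_asymm hlt (h x hxD (fun h' => hzx h'.symm))
            have hC2 : ¬(z ∈ D ∧ ∀ w ∈ D, w ≠ z → π₂ w < π₂ z) := by
              rintro ⟨-, h⟩
              have hlt : π₂ z < π₂ y := key₂ z y (by
                rw [blk_other (hwS z hzD) hzy hzx, blk_fst hyS x]; omega)
              exact lt_asymm hlt (h y hyD (fun h' => hzy h'.symm))
            rw [if_neg hC1, if_neg hC2, if_pos ⟨hxD, hyD, hDS⟩, if_neg hzx, if_neg hzy]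
            norm_num
      · -- y ∉ D : guard false
        have hg : ¬(x ∈ D ∧ y ∈ D ∧ ∀ s ∈ S, s ∉ D) := fun h => hyD h.2.1
        by_cases hzx : z = x
        · have hC1 : z ∈ D ∧ ∀ w ∈ D, w ≠ z → π₁ w < π₁ z := by
            refine ⟨hzD, fun w hw hwz => key₁ w z ?_⟩
            rw [hzx, blk_fst hxS,
              blk_other (hwS w hw) (fun h : w = x => hwz (h.trans hzx.symm)) (fun h : w = y => hyD (h ▸ hw))]
            omega
          have hC2 : z ∈ D ∧ ∀ w ∈ D, w ≠ z → π₂ w < π₂ z := by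
            refine ⟨hzD, fun w hw hwz => key₂ w z ?_⟩
            rw [hzx, blk_snd hxS hxy,
              blk_other (hwS w hw) (fun h : w = y => hyD (h ▸ hw)) (fun h : w = x => hwz (h.trans hzx.symm))]
            omega
          rw [if_pos hC1, if_pos hC2, if_neg hg, sub_self]
        · have hzy : z ≠ y := fun h => hyD (h ▸ hzD)
          have hC1 : ¬(z ∈ D ∧ ∀ w ∈ D, w ≠ z → π₁ w < π₁ z) := by
            rintro ⟨-, h⟩
            have hlt : π₁ z < π₁ x := key₁ z x (by
              rw [blk_other (hwS z hzD) hzx hzy, blk_fst hxS y]; omega)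
            exact lt_asymm hlt (h x hxD (fun h' => hzx h'.symm))
          have hC2 : ¬(z ∈ D ∧ ∀ w ∈ D, w ≠ z → π₂ w < π₂ z) := by
            rintro ⟨-, h⟩
            have hlt : π₂ z < π₂ x := key₂ z x (by
              rw [blk_other (hwS z hzD) hzy hzx, blk_snd hxS hxy]; omega)
            exact lt_asymm hlt (h x hxD (fun h' => hzx h'.symm))
          rw [if_neg hC1, if_neg hC2, if_neg hg, sub_self]
    · -- x ∉ D : guard false
      have hg : ¬(x ∈ D ∧ y ∈ D ∧ ∀ s ∈ S, s ∉ D) := fun h => hxD h.1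
      have hzx : z ≠ x := fun h => hxD (h ▸ hzD)
      by_cases hyD : y ∈ D
      · by_cases hzy : z = y
        · have hC1 : z ∈ D ∧ ∀ w ∈ D, w ≠ z → π₁ w < π₁ z := by
            refine ⟨hzD, fun w hw hwz => key₁ w z ?_⟩
            rw [hzy, blk_snd hyS (Ne.symm hxy),
              blk_other (hwS w hw) (fun h : w = x => hxD (h ▸ hw)) (fun h : w = y => hwz (h.trans hzy.symm))]
            omega
          have hC2 : z ∈ D ∧ ∀ w ∈ D, w ≠ z → π₂ w < π₂ z := by
            refine ⟨hzD, fun w hw hwz => key₂ w z ?_⟩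
            rw [hzy, blk_fst hyS x,
              blk_other (hwS w hw) (fun h : w = y => hwz (h.trans hzy.symm)) (fun h : w = x => hxD (h ▸ hw))]
            omega
          rw [if_pos hC1, if_pos hC2, if_neg hg, sub_self]
        · have hC1 : ¬(z ∈ D ∧ ∀ w ∈ D, w ≠ z → π₁ w < π₁ z) := by
            rintro ⟨-, h⟩
            have hlt : π₁ z < π₁ y := key₁ z y (by
              rw [blk_other (hwS z hzD) hzx hzy, blk_snd hyS (Ne.symm hxy)]; omega)
            exact lt_asymm hlt (h y hyD (fun h' => hzy h'.symm))
          have hC2 : ¬(z ∈ D ∧ ∀ w ∈ D, w ≠ z → π₂ w < π₂ z) := by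
            rintro ⟨-, h⟩
            have hlt : π₂ z < π₂ y := key₂ z y (by
              rw [blk_other (hwS z hzD) hzy hzx, blk_fst hyS x]; omega)
            exact lt_asymm hlt (h y hyD (fun h' => hzy h'.symm))
          rw [if_neg hC1, if_neg hC2, if_neg hg, sub_self]
      · -- x ∉ D, y ∉ D
        have hzy : z ≠ y := fun h => hyD (h ▸ hzD)
        have hiff : (z ∈ D ∧ ∀ w ∈ D, w ≠ z → π₁ w < π₁ z) ↔
            (z ∈ D ∧ ∀ w ∈ D, w ≠ z → π₂ w < π₂ z) := by
          refine and_congr_right fun _ => ?_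
          constructor <;> intro h w hw hwz
          · exact (iff₁₂ w z (fun hh => hxD (hh ▸ hw)) (fun hh => hyD (hh ▸ hw)) hzx hzy).mp
              (h w hw hwz)
          · exact (iff₁₂ w z (fun hh => hxD (hh ▸ hw)) (fun hh => hyD (hh ▸ hw)) hzx hzy).mpr
              (h w hw hwz)
        rw [if_congr hiff rfl rfl, sub_self, if_neg hg]
  · -- some s ∈ S ∩ D
    push_neg at hDS
    obtain ⟨s, hsS, hsD⟩ := hDS
    have hg : ¬(x ∈ D ∧ y ∈ D ∧ ∀ t ∈ S, t ∉ D) := fun h => h.2.2 s hsS hsD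
    by_cases hzS : z ∈ S
    · have hpt : ∀ w, w ∈ D → w ≠ z → (π₁ w < π₁ z ↔ π₂ w < π₂ z) := by
        intro w hw hwz
        by_cases hwx : w = x
        · refine iff_of_true (key₁ w z ?_) (key₂ w z ?_)
          · rw [hwx, blk_fst hxS, blk_mem hzS]; omega
          · rw [hwx, blk_snd hxS hxy, blk_mem hzS]; omega
        · by_cases hwy : w = y
          · refine iff_of_true (key₁ w z ?_) (key₂ w z ?_)
            · rw [hwy, blk_snd hyS (Ne.symm hxy), blk_mem hzS]; omega
            · rw [hwy, blk_fst hyS x, blk_mem hzS]; omega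
          · exact iff₁₂ w z hwx hwy (fun h => hxS (h ▸ hzS)) (fun h => hyS (h ▸ hzS))
      have hiff : (z ∈ D ∧ ∀ w ∈ D, w ≠ z → π₁ w < π₁ z) ↔
          (z ∈ D ∧ ∀ w ∈ D, w ≠ z → π₂ w < π₂ z) := by
        refine and_congr_right fun _ => ?_
        constructor <;> intro h w hw hwz
        · exact (hpt w hw hwz).mp (h w hw hwz)
        · exact (hpt w hw hwz).mpr (h w hw hwz)
      rw [if_congr hiff rfl rfl, sub_self, if_neg hg]
    · have hsz : s ≠ z := fun h => hzS (h ▸ hsS)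
      have hC1 : ¬(z ∈ D ∧ ∀ w ∈ D, w ≠ z → π₁ w < π₁ z) := by
        rintro ⟨-, h⟩
        have hlt : π₁ z < π₁ s := key₁ z s (by
          rw [blk_mem hsS x y]; exact blk_lt_three hzS x y)
        exact lt_asymm hlt (h s hsD hsz)
      have hC2 : ¬(z ∈ D ∧ ∀ w ∈ D, w ≠ z → π₂ w < π₂ z) := by
        rintro ⟨-, h⟩
        have hlt : π₂ z < π₂ s := key₂ z s (by
          rw [blk_mem hsS y x]; exact blk_lt_three hzS y x)
        exact lt_asymm hlt (h s hsD hsz)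
      rw [if_neg hC1, if_neg hC2, if_neg hg, sub_self]


lemma sum_pow_card_real (B : Finset X) :
    ∑ W ∈ B.powerset, ((-1 : ℝ)) ^ W.card = if B = ∅ then 1 else 0 := by
  have h := congrArg (fun z : ℤ => (z : ℝ)) (Finset.sum_powerset_neg_one_pow_card (x := B))
  push_cast at h
  simpa using h

lemma sum_sdiff_sign (B : Finset X) :
    ∑ W ∈ B.powerset, ((-1 : ℝ)) ^ ((B \ W).card) = if B = ∅ then 1 else 0 := by
  rw [← sum_pow_card_real]
  refine Finset.sum_nbij' (fun W => B \ W) (fun W => B \ W) ?_ ?_ ?_ ?_ ?_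
  · intro U hU; exact Finset.mem_powerset.mpr (Finset.sdiff_subset)
  · intro U hU; exact Finset.mem_powerset.mpr (Finset.sdiff_subset)
  · intro U hU; exact Finset.sdiff_sdiff_eq_self (Finset.mem_powerset.mp hU)
  · intro U hU; exact Finset.sdiff_sdiff_eq_self (Finset.mem_powerset.mp hU)
  · intro U hU; rfl

lemma comb (T A : Finset X) :
    ∑ U ∈ T.powerset.filter (fun U => A ⊆ U), ((-1 : ℝ)) ^ ((T \ U).card)
      = if A = T then 1 else 0 := by
  by_cases hAT : A ⊆ T
  · have : ∑ U ∈ T.powerset.filter (fun U => A ⊆ U), ((-1 : ℝ)) ^ ((T \ U).card)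
        = ∑ W ∈ (T \ A).powerset, ((-1 : ℝ)) ^ W.card := by
      refine Finset.sum_nbij' (fun U => T \ U) (fun W => T \ W) ?_ ?_ ?_ ?_ ?_
      · intro U hU
        rw [Finset.mem_filter, Finset.mem_powerset] at hU
        exact Finset.mem_powerset.mpr (Finset.sdiff_subset_sdiff le_rfl hU.2)
      · intro W hW
        rw [Finset.mem_powerset] at hW
        rw [Finset.mem_filter, Finset.mem_powerset]
        refine ⟨Finset.sdiff_subset, fun a ha => Finset.mem_sdiff.mpr ⟨hAT ha, ?_⟩⟩
        intro haW
        exact (Finset.mem_sdiff.mp (hW haW)).2 ha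
      · intro U hU
        rw [Finset.mem_filter, Finset.mem_powerset] at hU
        exact Finset.sdiff_sdiff_eq_self hU.1
      · intro W hW
        rw [Finset.mem_powerset] at hW
        exact Finset.sdiff_sdiff_eq_self (hW.trans Finset.sdiff_subset)
      · intro U hU; rfl
    rw [this, sum_pow_card_real]
    congr 1
    rw [Finset.sdiff_eq_empty_iff_subset]
    exact propext ⟨fun h => le_antisymm hAT h, fun h => h ▸ le_rfl⟩
  · rw [Finset.filter_eq_empty_iff.mpr, Finset.sum_empty, if_neg]
    · intro h; exact hAT (h ▸ le_rfl)
    · intro U hU hA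
      exact hAT (hA.trans (Finset.mem_powerset.mp hU))

lemma single_diff_eq_sum (𝒟 : Finset (Finset X)) {D : Finset X} (hD : D ∈ 𝒟) {x y : X}
    (hx : x ∈ D) (hy : y ∈ D) (hxy : x ≠ y) :
    (Pi.single ((⟨D, hD⟩ : {D : Finset X // D ∈ 𝒟}), x) (1 : ℝ)
        - Pi.single (⟨D, hD⟩, y) 1)
      = ∑ U ∈ (D \ {x, y}).powerset,
          ((-1 : ℝ)) ^ (((D \ {x, y}) \ U).card) •
            deltaVec 𝒟 x y ((Finset.univ \ {x, y}) \ U) := by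
  funext p
  obtain ⟨⟨D', hD'⟩, z⟩ := p
  simp only [Finset.sum_apply, Pi.sub_apply, Pi.smul_apply, smul_eq_mul, Pi.single_apply,
    deltaVec, Prod.mk.injEq, Subtype.mk.injEq]
  by_cases hxy' : x ∈ D' ∧ y ∈ D'
  case neg =>
    rw [if_neg (fun h : D' = D ∧ z = x => hxy' ⟨h.1 ▸ hx, h.1 ▸ hy⟩),
      if_neg (fun h : D' = D ∧ z = y => hxy' ⟨h.1 ▸ hx, h.1 ▸ hy⟩), sub_self]
    refine (Finset.sum_eq_zero fun U hU => ?_).symm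
    rw [if_neg (fun h => hxy' ⟨h.1, h.2.1⟩), mul_zero]
  case pos =>
    obtain ⟨hxD', hyD'⟩ := hxy'
    have hterm : ∀ U ∈ (D \ {x, y}).powerset,
        ((-1 : ℝ)) ^ (((D \ {x, y}) \ U).card) *
          (if x ∈ D' ∧ y ∈ D' ∧ ∀ s ∈ (Finset.univ \ {x, y}) \ U, s ∉ D'
           then (if z = x then 1 else if z = y then -1 else 0) else 0)
        = (if D' \ {x, y} ⊆ U then
            ((-1 : ℝ)) ^ (((D \ {x, y}) \ U).card) *
              (if z = x then 1 else if z = y then -1 else 0) else 0) := by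
      intro U hU
      by_cases hAU : D' \ {x, y} ⊆ U
      · have hg : x ∈ D' ∧ y ∈ D' ∧ ∀ s ∈ (Finset.univ \ {x, y}) \ U, s ∉ D' := by
          refine ⟨hxD', hyD', fun s hs hsD' => ?_⟩
          rw [Finset.mem_sdiff, Finset.mem_sdiff] at hs
          exact hs.2 (hAU (Finset.mem_sdiff.mpr ⟨hsD', hs.1.2⟩))
        rw [if_pos hAU, if_pos hg]
      · rw [if_neg hAU, if_neg, mul_zero]
        rintro ⟨-, -, h3⟩
        refine hAU fun t ht => ?_
        rw [Finset.mem_sdiff] at ht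
        by_contra htU
        exact h3 t (Finset.mem_sdiff.mpr ⟨Finset.mem_sdiff.mpr ⟨Finset.mem_univ t, ht.2⟩, htU⟩)
          ht.1
    rw [Finset.sum_congr rfl hterm, ← Finset.sum_filter, ← Finset.sum_mul, comb]
    have hDD : D' = D ↔ D' \ {x, y} = D \ {x, y} := by
      constructor
      · intro h; rw [h]
      · intro h
        have h1 : ({x, y} : Finset X) ⊆ D' := by
          intro t ht
          rcases Finset.mem_insert.mp ht with rfl | ht
          · exact hxD'
          · rw [Finset.mem_singleton.mp ht]; exact hyD'
        have h2 : ({x, y} : Finset X) ⊆ D := by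
          intro t ht
          rcases Finset.mem_insert.mp ht with rfl | ht
          · exact hx
          · rw [Finset.mem_singleton.mp ht]; exact hy
        rw [← Finset.sdiff_union_of_subset h1, ← Finset.sdiff_union_of_subset h2, h]
    by_cases hA : D' \ {x, y} = D \ {x, y}
    · have hD'D : D' = D := hDD.mpr hA
      rw [if_pos hA, one_mul, if_congr (and_iff_right hD'D) rfl rfl,
        if_congr (and_iff_right hD'D) rfl rfl]
      by_cases hzx : z = x
      · have hzy : ¬ z = y := fun h => hxy (hzx.symm.trans h)
        rw [if_pos hzx, if_neg hzy, if_pos hzx]; norm_num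
      · by_cases hzy : z = y
        · rw [if_neg hzx, if_pos hzy, if_neg hzx, if_pos hzy]; norm_num
        · rw [if_neg hzx, if_neg hzy, if_neg hzx, if_neg hzy]; norm_num
    · have hD'D : ¬ D' = D := fun h => hA (hDD.mp h)
      rw [if_neg hA, zero_mul, if_neg (fun h => hD'D h.1), if_neg (fun h => hD'D h.1),
        sub_self]

lemma delta_mem (𝒟 : Finset (Finset X)) {x y : X} (hxy : x ≠ y) (U : Finset X) :
    deltaVec 𝒟 x y ((Finset.univ \ {x, y}) \ U) ∈
      vectorSpan ℝ (Set.range (fun π : X ≃ Fin (Fintype.card X) => rhoVec 𝒟 π)) := by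
  obtain ⟨π₁, π₂, h⟩ := rho_diff_delta 𝒟 hxy ((Finset.univ \ {x, y}) \ U)
    (by simp) (by simp)
  rw [← h]
  exact vsub_mem_vectorSpan ℝ ⟨π₁, rfl⟩ ⟨π₂, rfl⟩

/-- The linear subspace of "signed" vectors: zero row sums and zero off-support. -/
def Vsub (𝒟 : Finset (Finset X)) : Submodule ℝ (({D : Finset X // D ∈ 𝒟} × X) → ℝ) where
  carrier := {v | (∀ D : {D : Finset X // D ∈ 𝒟}, ∑ x ∈ D.1, v (D, x) = 0) ∧
      ∀ (D : {D : Finset X // D ∈ 𝒟}) (x : X), x ∉ D.1 → v (D, x) = 0}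
  add_mem' := by
    rintro a b ⟨ha1, ha2⟩ ⟨hb1, hb2⟩
    refine ⟨fun D => ?_, fun D x hx => ?_⟩
    · simp only [Pi.add_apply]
      rw [Finset.sum_add_distrib, ha1 D, hb1 D, add_zero]
    · simp only [Pi.add_apply]
      rw [ha2 D x hx, hb2 D x hx, add_zero]
  zero_mem' := ⟨fun D => by simp, fun D x hx => rfl⟩
  smul_mem' := by
    rintro c a ⟨ha1, ha2⟩
    refine ⟨fun D => ?_, fun D x hx => ?_⟩
    · simp only [Pi.smul_apply, smul_eq_mul]
      rw [← Finset.mul_sum, ha1 D, mul_zero]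
    · simp only [Pi.smul_apply, smul_eq_mul]
      rw [ha2 D x hx, mul_zero]

noncomputable def cD (𝒟 : Finset (Finset X)) (hne : ∀ D ∈ 𝒟, D.Nonempty)
    (D : {D : Finset X // D ∈ 𝒟}) : X := (hne D.1 D.2).choose

lemma cD_mem (𝒟 : Finset (Finset X)) (hne : ∀ D ∈ 𝒟, D.Nonempty)
    (D : {D : Finset X // D ∈ 𝒟}) : cD 𝒟 hne D ∈ D.1 := (hne D.1 D.2).choose_spec

/-- basis vector family for `Vsub`. -/
noncomputable def bFun (𝒟 : Finset (Finset X)) (hne : ∀ D ∈ 𝒟, D.Nonempty)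
    (j : Σ D : {D : Finset X // D ∈ 𝒟}, {x : X // x ∈ D.1 ∧ x ≠ cD 𝒟 hne D}) :
    ({D : Finset X // D ∈ 𝒟} × X) → ℝ :=
  Pi.single (j.1, (j.2.1 : X)) (1 : ℝ) - Pi.single (j.1, cD 𝒟 hne j.1) 1

/-- Every element of `Vsub` is the canonical combination of the `bFun`s. -/
lemma repr_eq (𝒟 : Finset (Finset X)) (hne : ∀ D ∈ 𝒟, D.Nonempty)
    (v : ({D : Finset X // D ∈ 𝒟} × X) → ℝ) (hv : v ∈ Vsub 𝒟) :
    v = ∑ j : Σ D : {D : Finset X // D ∈ 𝒟}, {x : X // x ∈ D.1 ∧ x ≠ cD 𝒟 hne D},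
        v (j.1, (j.2.1 : X)) • bFun 𝒟 hne j := by
  obtain ⟨hv1, hv2⟩ := hv
  funext q
  obtain ⟨d, z⟩ := q
  rw [Finset.sum_apply, ← Finset.univ_sigma_univ, Finset.sum_sigma]
  have hcoe : ∀ (D : {D : Finset X // D ∈ 𝒟}) (f : X → ℝ),
      (∑ x : {x : X // x ∈ D.1 ∧ x ≠ cD 𝒟 hne D}, f (x : X))
      = ∑ x ∈ D.1.erase (cD 𝒟 hne D), f x := by
    intro D f
    rw [← Finset.sum_coe_sort (D.1.erase (cD 𝒟 hne D)) f]
    exact Fintype.sum_equiv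
      (Equiv.subtypeEquivRight (fun x => by rw [Finset.mem_erase]; exact and_comm))
      _ _ (fun x => rfl)
  have hsum : ∀ D : {D : Finset X // D ∈ 𝒟},
      ∑ x : {x : X // x ∈ D.1 ∧ x ≠ cD 𝒟 hne D},
        (v (D, (x : X)) • bFun 𝒟 hne ⟨D, x⟩) (d, z)
      = if D = d then v (d, z) else 0 := by
    intro D
    by_cases hDd : D = d
    · subst hDd
      rw [if_pos rfl]
      have hstep : ∀ x : {x : X // x ∈ D.1 ∧ x ≠ cD 𝒟 hne D},
          (v (D, (x : X)) • bFun 𝒟 hne ⟨D, x⟩) (D, z)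
          = v (D, (x : X)) * ((if z = (x : X) then 1 else 0)
              - (if z = cD 𝒟 hne D then 1 else 0)) := by
        intro x
        simp only [bFun, Pi.smul_apply, Pi.sub_apply, Pi.single_apply, smul_eq_mul,
          Prod.mk.injEq, true_and]
      rw [Finset.sum_congr rfl (fun x _ => hstep x),
        hcoe D (fun w => v (D, w) * ((if z = w then 1 else 0)
          - (if z = cD 𝒟 hne D then 1 else 0)))]
      by_cases hz : z = cD 𝒟 hne D
      · have hterm : ∀ x ∈ D.1.erase (cD 𝒟 hne D),
            v (D, x) * ((if z = x then 1 else 0) - (if z = cD 𝒟 hne D then 1 else 0))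
            = - v (D, x) := by
          intro x hx
          rw [if_neg (fun h => (Finset.mem_erase.mp hx).1 (h.symm.trans hz)), if_pos hz]
          ring
        rw [Finset.sum_congr rfl hterm, Finset.sum_neg_distrib,
          Finset.sum_erase_eq_sub (cD_mem 𝒟 hne D), hv1 D, hz]
        ring
      · have hterm : ∀ x ∈ D.1.erase (cD 𝒟 hne D),
            v (D, x) * ((if z = x then 1 else 0) - (if z = cD 𝒟 hne D then 1 else 0))
            = if x = z then v (D, x) else 0 := by
          intro x hx
          rw [if_neg hz]
          by_cases h : x = z
          · rw [if_pos h.symm, if_pos h]; ring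
          · rw [if_neg (fun hh => h hh.symm), if_neg h]; ring
        rw [Finset.sum_congr rfl hterm, Finset.sum_ite_eq' (D.1.erase (cD 𝒟 hne D)) z
          (fun w => v (D, w))]
        by_cases hzD : z ∈ D.1
        · rw [if_pos (Finset.mem_erase.mpr ⟨hz, hzD⟩)]
        · rw [if_neg (fun h => hzD (Finset.mem_erase.mp h).2), hv2 D z hzD]
    · rw [if_neg hDd]
      refine Finset.sum_eq_zero fun x _ => ?_
      simp only [bFun, Pi.smul_apply, Pi.sub_apply, Pi.single_apply, smul_eq_mul,
        Prod.mk.injEq]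
      rw [if_neg (fun h => hDd h.1.symm), if_neg (fun h => hDd h.1.symm)]
      ring
  have hshow : ∑ D : {D : Finset X // D ∈ 𝒟}, ∑ x : {x : X // x ∈ D.1 ∧ x ≠ cD 𝒟 hne D},
      (v (D, (x : X)) • bFun 𝒟 hne ⟨D, x⟩) (d, z) = v (d, z) := by
    rw [Finset.sum_congr rfl (fun D _ => hsum D),
      Finset.sum_ite_eq' Finset.univ d (fun _ => v (d, z)), if_pos (Finset.mem_univ d)]
  exact (hshow.symm.trans (by rfl)).symm ▸ rfl

lemma bFun_mem_vectorSpan (𝒟 : Finset (Finset X)) (hne : ∀ D ∈ 𝒟, D.Nonempty)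
    (j : Σ D : {D : Finset X // D ∈ 𝒟}, {x : X // x ∈ D.1 ∧ x ≠ cD 𝒟 hne D}) :
    bFun 𝒟 hne j ∈
      vectorSpan ℝ (Set.range (fun π : X ≃ Fin (Fintype.card X) => rhoVec 𝒟 π)) := by
  obtain ⟨⟨D, hD⟩, x, hx1, hx2⟩ := j
  have hc : cD 𝒟 hne ⟨D, hD⟩ ∈ D := cD_mem 𝒟 hne ⟨D, hD⟩
  show ((Pi.single ((⟨D, hD⟩ : {D : Finset X // D ∈ 𝒟}), x) (1 : ℝ) : ({D : Finset X // D ∈ 𝒟} × X) → ℝ)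
      - Pi.single (⟨D, hD⟩, cD 𝒟 hne ⟨D, hD⟩) 1) ∈ _
  rw [single_diff_eq_sum 𝒟 hD hx1 hc hx2]
  exact Submodule.sum_mem _ fun U _ => Submodule.smul_mem _ _ (delta_mem 𝒟 hx2 U)

lemma Vsub_le_vectorSpan (𝒟 : Finset (Finset X)) (hne : ∀ D ∈ 𝒟, D.Nonempty) :
    Vsub 𝒟 ≤ vectorSpan ℝ (Set.range (fun π : X ≃ Fin (Fintype.card X) => rhoVec 𝒟 π)) := by
  intro v hv
  rw [repr_eq 𝒟 hne v hv]
  exact Submodule.sum_mem _ fun j _ => Submodule.smul_mem _ _ (bFun_mem_vectorSpan 𝒟 hne j)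

lemma bFun_mem_Vsub (𝒟 : Finset (Finset X)) (hne : ∀ D ∈ 𝒟, D.Nonempty)
    (j : Σ D : {D : Finset X // D ∈ 𝒟}, {x : X // x ∈ D.1 ∧ x ≠ cD 𝒟 hne D}) :
    bFun 𝒟 hne j ∈ Vsub 𝒟 := by
  have hsingle : ∀ (w : X), w ∈ j.1.1 → ∀ D' : {D : Finset X // D ∈ 𝒟},
      ∑ x ∈ D'.1, (Pi.single (j.1, w) (1 : ℝ) :
        ({D : Finset X // D ∈ 𝒟} × X) → ℝ) (D', x) = (if D' = j.1 then (1:ℝ) else 0) := by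
    intro w hw D'
    by_cases h : D' = j.1
    · subst h
      rw [if_pos rfl]
      have hb : ∀ x ∈ j.1.1, (Pi.single (j.1, w) (1 : ℝ) :
          ({D : Finset X // D ∈ 𝒟} × X) → ℝ) (j.1, x) = if x = w then (1:ℝ) else 0 := by
        intro x hx
        simp only [Pi.single_apply, Prod.mk.injEq, true_and]
      rw [Finset.sum_congr rfl hb, Finset.sum_ite_eq' j.1.1 w (fun _ => (1:ℝ)), if_pos hw]
    · rw [if_neg h]
      refine Finset.sum_eq_zero fun x hx => ?_
      simp only [Pi.single_apply, Prod.mk.injEq]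
      rw [if_neg (fun hh => h hh.1)]
  refine ⟨fun D' => ?_, fun D' x hx => ?_⟩
  · simp only [bFun, Pi.sub_apply]
    rw [Finset.sum_sub_distrib, hsingle (j.2.1 : X) j.2.2.1 D',
      hsingle (cD 𝒟 hne j.1) (cD_mem 𝒟 hne j.1) D', sub_self]
  · simp only [bFun, Pi.sub_apply, Pi.single_apply, Prod.mk.injEq]
    rw [if_neg, if_neg, sub_self]
    · rintro ⟨rfl, rfl⟩
      exact hx (cD_mem 𝒟 hne j.1)
    · rintro ⟨rfl, rfl⟩
      exact hx j.2.2.1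

lemma finrank_Vsub (𝒟 : Finset (Finset X)) (hne : ∀ D ∈ 𝒟, D.Nonempty) :
    Module.finrank ℝ (Vsub 𝒟) = ∑ D ∈ 𝒟, (D.card - 1) := by
  classical
  let J := Σ D : {D : Finset X // D ∈ 𝒟}, {x : X // x ∈ D.1 ∧ x ≠ cD 𝒟 hne D}
  let b : J → Vsub 𝒟 := fun j => ⟨bFun 𝒟 hne j, bFun_mem_Vsub 𝒟 hne j⟩
  have hinj : ∀ j j' : J, j.1 = j'.1 → (j.2.1 : X) = (j'.2.1 : X) → j = j' := by
    rintro ⟨D, x, hx⟩ ⟨D', x', hx'⟩ h1 h2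
    dsimp at h1 h2
    subst h1
    exact congrArg (Sigma.mk D) (Subtype.ext h2)
  have hli : LinearIndependent ℝ b := by
    rw [Fintype.linearIndependent_iff]
    intro g hg j₀
    have hg' : ∑ j : J, g j • bFun 𝒟 hne j = 0 := by
      have := congrArg (Submodule.subtype (Vsub 𝒟)) hg
      simpa [b] using this
    have := congrFun hg' (j₀.1, (j₀.2.1 : X))
    rw [Finset.sum_apply] at this
    simp only [Pi.smul_apply, bFun, Pi.sub_apply, Pi.single_apply, smul_eq_mul,
      Prod.mk.injEq, Pi.zero_apply] at this
    rw [Finset.sum_eq_single_of_mem j₀ (Finset.mem_univ j₀)] at this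
    · rw [if_pos ⟨rfl, rfl⟩, if_neg, mul_sub, mul_one, mul_zero, sub_zero] at this
      · exact this
      · rintro ⟨-, h2⟩
        exact j₀.2.2.2 h2
    · intro j _ hj
      rw [if_neg, if_neg, sub_self, mul_zero]
      · rintro ⟨h1, h2⟩
        exact j₀.2.2.2 (h2.trans (congrArg (cD 𝒟 hne) h1.symm))
      · rintro ⟨h1, h2⟩
        exact hj (hinj j j₀ h1.symm h2.symm)
  have hsp : ⊤ ≤ Submodule.span ℝ (Set.range b) := by
    rintro ⟨v, hv⟩ -
    have hrepr := repr_eq 𝒟 hne v hv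
    have : (⟨v, hv⟩ : Vsub 𝒟) = ∑ j : J, v (j.1, (j.2.1 : X)) • b j := by
      apply Subtype.ext
      have hcoe2 : ((∑ j : J, v (j.1, (j.2.1 : X)) • b j : Vsub 𝒟) :
          ({D : Finset X // D ∈ 𝒟} × X) → ℝ)
          = ∑ j : J, v (j.1, (j.2.1 : X)) • bFun 𝒟 hne j := by
        simp only [AddSubmonoidClass.coe_finset_sum, SetLike.val_smul, b]
      rw [hcoe2]
      exact hrepr
    rw [this]
    exact Submodule.sum_mem _ fun j _ =>
      Submodule.smul_mem _ _ (Submodule.subset_span ⟨j, rfl⟩)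
  have hbasis : Module.Basis J ℝ (Vsub 𝒟) := Module.Basis.mk hli hsp
  rw [Module.finrank_eq_card_basis hbasis]
  have hcard : ∀ D : {D : Finset X // D ∈ 𝒟},
      Fintype.card {x : X // x ∈ D.1 ∧ x ≠ cD 𝒟 hne D} = D.1.card - 1 := by
    intro D
    rw [Fintype.card_subtype]
    have : Finset.univ.filter (fun x => x ∈ D.1 ∧ x ≠ cD 𝒟 hne D)
        = D.1.erase (cD 𝒟 hne D) := by
      ext x
      simp only [Finset.mem_filter, Finset.mem_univ, true_and, Finset.mem_erase]
      exact and_comm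
    rw [this, Finset.card_erase_of_mem (cD_mem 𝒟 hne D)]
  rw [Fintype.card_sigma]
  rw [Finset.sum_congr rfl (fun D _ => hcard D)]
  exact Finset.sum_coe_sort 𝒟 (fun D => D.card - 1)

lemma rho_sum_one (𝒟 : Finset (Finset X)) (π : X ≃ Fin (Fintype.card X))
    (D : {D : Finset X // D ∈ 𝒟}) (hneD : D.1.Nonempty) :
    ∑ x ∈ D.1, rhoVec 𝒟 π (D, x) = 1 := by
  obtain ⟨m, hm, hmax⟩ := Finset.exists_max_image D.1 (fun w => π w) hneD
  have huniq : ∀ x ∈ D.1,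
      ((x ∈ D.1 ∧ ∀ w ∈ D.1, w ≠ x → π w < π x) ↔ x = m) := by
    intro x hx
    constructor
    · rintro ⟨-, h⟩
      by_contra hxm
      exact absurd (h m hm (fun e => hxm e.symm)) (not_lt.mpr (hmax x hx))
    · rintro rfl
      exact ⟨hm, fun w hw hwm =>
        lt_of_le_of_ne (hmax w hw) (fun e => hwm (π.injective (Fin.ext (congrArg _ e))))⟩
  calc ∑ x ∈ D.1, rhoVec 𝒟 π (D, x)
      = ∑ x ∈ D.1, if x = m then 1 else 0 :=
        Finset.sum_congr rfl (fun x hx => by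
          simp only [rhoVec]
          exact if_congr (huniq x hx) rfl rfl)
    _ = 1 := by
        rw [Finset.sum_ite_eq' D.1 m (fun _ => (1:ℝ)), if_pos hm]

lemma rho_zero (𝒟 : Finset (Finset X)) (π : X ≃ Fin (Fintype.card X))
    (D : {D : Finset X // D ∈ 𝒟}) (x : X) (hx : x ∉ D.1) :
    rhoVec 𝒟 π (D, x) = 0 := by
  simp only [rhoVec]
  rw [if_neg (fun h => hx h.1)]

end RUMAux

open RUMAux in
/-- The affine hull of the set of deterministic choice vectors `{ρ^π}` is cut out by the
adding-up and zero constraints; consequently its dimension is `Σ_{D ∈ 𝒟} (|D| - 1)`. -/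
theorem affineSpan_rho_and_dim {X : Type*} [Fintype X] [DecidableEq X]
    (hX : 2 ≤ Fintype.card X) (𝒟 : Finset (Finset X))
    (hne : ∀ D ∈ 𝒟, Finset.Nonempty D)
    (h23 : ∀ D : Finset X, D.card = 2 ∨ D.card = 3 → D ∈ 𝒟) :
    ((affineSpan ℝ (Set.range (fun π : X ≃ Fin (Fintype.card X) => rhoVec 𝒟 π)) :
        Set (({D : Finset X // D ∈ 𝒟} × X) → ℝ)) =
      {q | (∀ D : {D : Finset X // D ∈ 𝒟}, ∑ x ∈ D.1, q (D, x) = 1) ∧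
           ∀ (D : {D : Finset X // D ∈ 𝒟}) (x : X), x ∉ D.1 → q (D, x) = 0})
    ∧ Module.finrank ℝ
        (affineSpan ℝ
          (Set.range (fun π : X ≃ Fin (Fintype.card X) => rhoVec 𝒟 π))).direction
        = ∑ D ∈ 𝒟, (D.card - 1) := by
  classical
  set ρ : (X ≃ Fin (Fintype.card X)) → (({D : Finset X // D ∈ 𝒟} × X) → ℝ) :=
    fun π => rhoVec 𝒟 π with hρ
  let π₀ : X ≃ Fin (Fintype.card X) := Fintype.equivFin X
  have hconstraints : ∀ π : X ≃ Fin (Fintype.card X),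
      (∀ D : {D : Finset X // D ∈ 𝒟}, ∑ x ∈ D.1, ρ π (D, x) = 1) ∧
      ∀ (D : {D : Finset X // D ∈ 𝒟}) (x : X), x ∉ D.1 → ρ π (D, x) = 0 :=
    fun π => ⟨fun D => rho_sum_one 𝒟 π D (hne D.1 D.2), fun D x hx => rho_zero 𝒟 π D x hx⟩
  have hVmem : ∀ q : ({D : Finset X // D ∈ 𝒟} × X) → ℝ,
      ((∀ D : {D : Finset X // D ∈ 𝒟}, ∑ x ∈ D.1, q (D, x) = 1) ∧
        ∀ (D : {D : Finset X // D ∈ 𝒟}) (x : X), x ∉ D.1 → q (D, x) = 0) →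
      q - ρ π₀ ∈ Vsub 𝒟 := by
    intro q hq
    refine ⟨fun D => ?_, fun D x hx => ?_⟩
    · simp only [Pi.sub_apply]
      rw [Finset.sum_sub_distrib, hq.1 D, (hconstraints π₀).1 D, sub_self]
    · simp only [Pi.sub_apply]
      rw [hq.2 D x hx, (hconstraints π₀).2 D x hx, sub_self]
  have hVmem' : ∀ q : ({D : Finset X // D ∈ 𝒟} × X) → ℝ,
      q - ρ π₀ ∈ Vsub 𝒟 →
      ((∀ D : {D : Finset X // D ∈ 𝒟}, ∑ x ∈ D.1, q (D, x) = 1) ∧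
        ∀ (D : {D : Finset X // D ∈ 𝒟}) (x : X), x ∉ D.1 → q (D, x) = 0) := by
    intro q hq
    obtain ⟨h1, h2⟩ := hq
    constructor
    · intro D
      have := h1 D
      simp only [Pi.sub_apply] at this
      rw [Finset.sum_sub_distrib, (hconstraints π₀).1 D] at this
      linarith
    · intro D x hx
      have := h2 D x hx
      simp only [Pi.sub_apply] at this
      rw [(hconstraints π₀).2 D x hx, sub_zero] at this
      exact this
  have hmk : ∀ q, q ∈ AffineSubspace.mk' (ρ π₀) (Vsub 𝒟) ↔
      ((∀ D : {D : Finset X // D ∈ 𝒟}, ∑ x ∈ D.1, q (D, x) = 1) ∧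
        ∀ (D : {D : Finset X // D ∈ 𝒟}) (x : X), x ∉ D.1 → q (D, x) = 0) := by
    intro q
    rw [AffineSubspace.mem_mk']
    exact ⟨fun h => hVmem' q h, fun h => hVmem q h⟩
  have hspan_eq : affineSpan ℝ (Set.range ρ) = AffineSubspace.mk' (ρ π₀) (Vsub 𝒟) := by
    apply le_antisymm
    · rw [affineSpan_le]
      rintro _ ⟨π, rfl⟩
      exact (hmk (ρ π)).mpr (hconstraints π)
    · intro q hq
      have hv : q - ρ π₀ ∈ Vsub 𝒟 := hVmem q ((hmk q).mp hq)
      have hdir : q - ρ π₀ ∈ (affineSpan ℝ (Set.range ρ)).direction := by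
        rw [direction_affineSpan]
        exact Vsub_le_vectorSpan 𝒟 hne hv
      have hmem : ρ π₀ ∈ affineSpan ℝ (Set.range ρ) := mem_affineSpan ℝ ⟨π₀, rfl⟩
      have := AffineSubspace.vadd_mem_of_mem_direction hdir hmem
      simpa [vadd_eq_add, sub_add_cancel] using this
  constructor
  · rw [hspan_eq]
    ext q
    exact hmk q
  · rw [hspan_eq, AffineSubspace.direction_mk']
    exact finrank_Vsub 𝒟 hne
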